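/- Let α₀, α₁, α₂, α₃ be elements of the cyclic root set Z = (−Π) ∪ {η} with α₀ + α₁ = α₂ + α₃ a root. Then {α₀, α₁} = {α₂, α₃}. -/
import Mathlib


open scoped RealInnerProductSpace

/-- A reduced root system with a chosen base (set of simple roots) in a
Euclidean space, together with the (integer) coefficient function expressing
each root in the base. -/
structure RootSystemBase (V : Type) [NormedAddCommGroup V] [InnerProductSpace ℝ V] where
  Δ : Set V
  base : Finset V
  c : V → V → ℤ
  finite : Δ.Finite
  nonzero : ∀ α ∈ Δ, α ≠ (0 : V)
  neg_mem : ∀ α ∈ Δ, -α ∈ Δ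
  reduced : ∀ α ∈ Δ, ∀ t : ℝ, t • α ∈ Δ → t = 1 ∨ t = -1
  reflect_mem : ∀ α ∈ Δ, ∀ β ∈ Δ, β - (2 * ⟪β, α⟫ / ⟪α, α⟫) • α ∈ Δ
  pairing_int : ∀ α ∈ Δ, ∀ β ∈ Δ, ∃ n : ℤ, 2 * ⟪β, α⟫ / ⟪α, α⟫ = (n : ℝ)
  base_sub : (base : Set V) ⊆ Δ
  base_indep : LinearIndependent ℝ (fun α : base => (α : V))
  coeff_eq : ∀ β ∈ Δ, β = ∑ α ∈ base, (c β α : ℝ) • α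
  coeff_sign : ∀ β ∈ Δ, (∀ α ∈ base, 0 ≤ c β α) ∨ (∀ α ∈ base, c β α ≤ 0)

namespace RootSystemBase

variable {V : Type} [NormedAddCommGroup V] [InnerProductSpace ℝ V] (R : RootSystemBase V)

/-- A positive root: all coefficients in the base are nonnegative. -/
def Positive (β : V) : Prop := β ∈ R.Δ ∧ ∀ α ∈ R.base, 0 ≤ R.c β α

/-- The height (degree) of a root: the sum of its coefficients in the base. -/
def height (β : V) : ℤ := ∑ α ∈ R.base, R.c β α

/-- `η` is the highest root: it is positive and dominates every root
coefficientwise. -/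
def IsHighest (η : V) : Prop :=
  R.Positive η ∧ ∀ β ∈ R.Δ, ∀ α ∈ R.base, R.c β α ≤ R.c η α

/-- The conjugate cyclic root set `Z† = Π ∪ {−η}`. -/
def Zdag (η : V) : Set V := (R.base : Set V) ∪ {-η}

/-- The cyclic root set `Z = −Z†`. -/
def Zset (η : V) : Set V := {α : V | -α ∈ R.Zdag η}

/-- Irreducibility of the root system. -/
def Irreducible : Prop :=
  ∀ A B : Set V, A ∪ B = R.Δ → (∀ a ∈ A, ∀ b ∈ B, ⟪a, b⟫ = 0) →
    A = ∅ ∨ B = ∅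

/-- The coroot of a root. -/
noncomputable def coroot (α : V) : V := (2 / ⟪α, α⟫) • α

end RootSystemBase

open scoped RealInnerProductSpace

namespace Scratch

variable {V : Type} [NormedAddCommGroup V] [InnerProductSpace ℝ V] [DecidableEq V]

lemma coeff_zero (base : Finset V)
    (hind : LinearIndependent ℝ (fun α : base => (α : V)))
    {g : V → ℝ} (hg : ∑ α ∈ base, g α • α = 0) :
    ∀ α ∈ base, g α = 0 := by
  intro a ha
  have h := linearIndependent_iff'.mp hind Finset.univ (fun x => g x) ?_ ⟨a, ha⟩ (Finset.mem_univ _)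
  · exact h
  · rw [← hg]
    exact (Finset.sum_coe_sort base (fun α => g α • α))

lemma ind_sum (base : Finset V) {a : V} (ha : a ∈ base) :
    ∑ α ∈ base, (if α = a then (1:ℝ) else 0) • α = a := by
  have : ∀ α ∈ base, (if α = a then (1:ℝ) else 0) • α = if α = a then a else 0 := by
    intro α _
    split <;> simp_all
  rw [Finset.sum_congr rfl this, Finset.sum_ite_eq' base a (fun _ => a), if_pos ha]

lemma ind_sum' (base : Finset V) {a : V} (ha : a ∈ base) :
    ∑ α ∈ base, (if α = a then (1:ℝ) else 0) = 1 := by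
  rw [Finset.sum_ite_eq' base a (fun _ => (1:ℝ)), if_pos ha]

/-- a+b = c+d with all in base implies {a,b}={c,d} -/
lemma pair_eq (base : Finset V)
    (hind : LinearIndependent ℝ (fun α : base => (α : V)))
    {a b c d : V} (ha : a ∈ base) (hb : b ∈ base) (hc : c ∈ base) (hd : d ∈ base)
    (h : a + b = c + d) : (a = c ∧ b = d) ∨ (a = d ∧ b = c) := by
  by_cases hac : a = c
  · left; exact ⟨hac, by subst hac; exact add_left_cancel h⟩
  by_cases had : a = d
  · right; refine ⟨had, ?_⟩
    subst had
    have : b + a = c + a := by linear_combination (norm := module) h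
    exact add_right_cancel this
  exfalso
  set g : V → ℝ := fun α => (if α = a then (1:ℝ) else 0) + (if α = b then (1:ℝ) else 0)
      - (if α = c then (1:ℝ) else 0) - (if α = d then (1:ℝ) else 0) with hgdef
  have hsum0 : ∑ α ∈ base, g α • α = 0 := by
    have expand : ∀ α ∈ base, g α • α = (if α = a then (1:ℝ) else 0) • α
        + (if α = b then (1:ℝ) else 0) • α - (if α = c then (1:ℝ) else 0) • α
        - (if α = d then (1:ℝ) else 0) • α := by
      intro α _
      simp [hgdef, sub_smul, add_smul]
    rw [Finset.sum_congr rfl expand]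
    rw [Finset.sum_sub_distrib, Finset.sum_sub_distrib, Finset.sum_add_distrib,
      ind_sum base ha, ind_sum base hb, ind_sum base hc, ind_sum base hd]
    linear_combination (norm := module) h
  have := coeff_zero base hind hsum0 a ha
  simp only [hgdef, if_pos rfl, if_neg hac, if_neg had] at this
  by_cases hab : a = b <;> simp [hab] at this <;> linarith

/-- The highest root can't equal a - c - d with a,c,d simple. -/
lemma not_eta (R : RootSystemBase V) {η : V} (hη : R.IsHighest η)
    {a c d : V} (ha : a ∈ R.base) (hc : c ∈ R.base) (hd : d ∈ R.base)
    (h : η = a - c - d) : False := by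
  have hηΔ := hη.1.1
  have hcoeff := R.coeff_eq η hηΔ
  set g : V → ℝ := fun α => (R.c η α : ℝ) - (if α = a then (1:ℝ) else 0)
      + (if α = c then (1:ℝ) else 0) + (if α = d then (1:ℝ) else 0) with hgdef
  have hsum0 : ∑ α ∈ R.base, g α • α = 0 := by
    have expand : ∀ α ∈ R.base, g α • α = (R.c η α : ℝ) • α
        - (if α = a then (1:ℝ) else 0) • α + (if α = c then (1:ℝ) else 0) • α
        + (if α = d then (1:ℝ) else 0) • α := by
      intro α _
      simp [hgdef, sub_smul, add_smul]
    rw [Finset.sum_congr rfl expand]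
    rw [Finset.sum_add_distrib, Finset.sum_add_distrib, Finset.sum_sub_distrib,
      ind_sum R.base ha, ind_sum R.base hc, ind_sum R.base hd, ← hcoeff]
    linear_combination (norm := module) h
  have hz := coeff_zero R.base R.base_indep hsum0
  have hval : ∀ α ∈ R.base, (R.c η α : ℝ) = (if α = a then (1:ℝ) else 0)
      - (if α = c then (1:ℝ) else 0) - (if α = d then (1:ℝ) else 0) := by
    intro α hα
    have := hz α hα
    simp only [hgdef] at this
    linarith
  have hsumval : ∑ α ∈ R.base, (R.c η α : ℝ) = -1 := by
    rw [Finset.sum_congr rfl hval, Finset.sum_sub_distrib, Finset.sum_sub_distrib,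
      ind_sum' R.base ha, ind_sum' R.base hc, ind_sum' R.base hd]
    ring
  have hnn : 0 ≤ ∑ α ∈ R.base, (R.c η α : ℝ) := by
    apply Finset.sum_nonneg
    intro α hα
    exact_mod_cast hη.1.2 α hα
  linarith

end Scratch

theorem cyclic_sum_determines_pair
    {V : Type} [NormedAddCommGroup V] [InnerProductSpace ℝ V]
    (R : RootSystemBase V) (hirr : R.Irreducible)
    {η : V} (hη : R.IsHighest η)
    {α₀ α₁ α₂ α₃ : V}
    (h₀ : α₀ ∈ R.Zset η) (h₁ : α₁ ∈ R.Zset η)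
    (h₂ : α₂ ∈ R.Zset η) (h₃ : α₃ ∈ R.Zset η)
    (hsum : α₀ + α₁ = α₂ + α₃) (hroot : α₀ + α₁ ∈ R.Δ) :
    ({α₀, α₁} : Set V) = {α₂, α₃} := by
  classical
  have hηΔ := hη.1.1
  have mem : ∀ {β : V}, β ∈ R.Zset η → -β ∈ R.base ∨ β = η := by
    intro β hβ
    rcases hβ with h | h
    · exact Or.inl h
    · exact Or.inr (neg_injective h)
  have no2 : η + η ∉ R.Δ := by
    intro h2
    have h2' : (2:ℝ) • η ∈ R.Δ := by rw [two_smul]; exact h2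
    rcases R.reduced η hηΔ 2 h2' with h | h <;> norm_num at h
  rcases mem h₀ with m₀ | e₀
  · rcases mem h₁ with m₁ | e₁
    · rcases mem h₂ with m₂ | e₂
      · rcases mem h₃ with m₃ | e₃
        · -- all four negatives of simples
          have h' : (-α₀) + (-α₁) = (-α₂) + (-α₃) := by
            linear_combination (norm := module) - hsum
          rcases Scratch.pair_eq R.base R.base_indep m₀ m₁ m₂ m₃ h' with ⟨p, q⟩ | ⟨p, q⟩
          · rw [neg_injective p, neg_injective q]
          · rw [neg_injective p, neg_injective q, Set.pair_comm]
        · -- α₃ = η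
          exfalso
          refine Scratch.not_eta R hη m₂ m₀ m₁ ?_
          rw [e₃] at hsum
          linear_combination (norm := module) - hsum
      · rcases mem h₃ with m₃ | e₃
        · -- α₂ = η
          exfalso
          refine Scratch.not_eta R hη m₃ m₀ m₁ ?_
          rw [e₂] at hsum
          linear_combination (norm := module) - hsum
        · -- α₂ = α₃ = η
          exfalso
          apply no2
          rw [show η + η = α₂ + α₃ by rw [e₂, e₃], ← hsum]
          exact hroot
    · -- α₁ = η
      rcases mem h₂ with m₂ | e₂
      · rcases mem h₃ with m₃ | e₃
        · exfalso
          refine Scratch.not_eta R hη m₀ m₂ m₃ ?_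
          rw [e₁] at hsum
          linear_combination (norm := module) hsum
        · -- α₁ = η, α₃ = η : α₀ = α₂
          rw [e₁, e₃] at hsum
          have : α₀ = α₂ := add_right_cancel hsum
          rw [this, e₁, e₃]
      · rcases mem h₃ with m₃ | e₃
        · -- α₁ = η, α₂ = η : α₀ = α₃
          rw [e₁, e₂] at hsum
          have h' : α₀ + η = α₃ + η := by linear_combination (norm := module) hsum
          have : α₀ = α₃ := add_right_cancel h'
          rw [this, e₁, e₂, Set.pair_comm]
        · exfalso
          apply no2
          rw [show η + η = α₂ + α₃ by rw [e₂, e₃], ← hsum]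
          exact hroot
  · rcases mem h₁ with m₁ | e₁
    · rcases mem h₂ with m₂ | e₂
      · rcases mem h₃ with m₃ | e₃
        · exfalso
          refine Scratch.not_eta R hη m₁ m₂ m₃ ?_
          rw [e₀] at hsum
          linear_combination (norm := module) hsum
        · -- α₀ = η, α₃ = η : α₁ = α₂
          rw [e₀, e₃] at hsum
          have h' : α₁ + η = α₂ + η := by linear_combination (norm := module) hsum
          have : α₁ = α₂ := add_right_cancel h'
          rw [this, e₀, e₃, Set.pair_comm]
      · rcases mem h₃ with m₃ | e₃
        · -- α₀ = η, α₂ = η : α₁ = α₃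
          rw [e₀, e₂] at hsum
          have h' : α₁ + η = α₃ + η := by linear_combination (norm := module) hsum
          have : α₁ = α₃ := add_right_cancel h'
          rw [this, e₀, e₂]
        · exfalso
          apply no2
          rw [show η + η = α₂ + α₃ by rw [e₂, e₃], ← hsum]
          exact hroot
    · exfalso
      apply no2
      rw [show η + η = α₀ + α₁ by rw [e₀, e₁]]
      exact hroot
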